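/- For each d ≥ 2 let X^{(d)} be a Latin hypercube sample of N = d points in [0,1)^d. Then liminf_{d→∞} γ_{D^d_0}(X^{(d)}) / √d ≥ √(2π/e). -/

import Mathlib

open MeasureTheory ProbabilityTheory Filter
open scoped ENNReal Classical

namespace LHSPaper

/-- The anchored box `[0,a) = ∏_i [0, a_i)` in `[0,1)^d`. -/
def anchoredBox {d : ℕ} (a : Fin d → ℝ) : Set (Fin d → ℝ) := {x | ∀ i, x i ∈ Set.Ico 0 (a i)}

/-- `C^d_0`, the collection of anchored boxes `[0,a)` with `a ∈ [0,1]^d`. -/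
def anchoredBoxes (d : ℕ) : Set (Set (Fin d → ℝ)) :=
  {S | ∃ a : Fin d → ℝ, (∀ i, a i ∈ Set.Icc (0 : ℝ) 1) ∧ S = anchoredBox a}

/-- `D^d_0`, the collection of differences `B \ A` of anchored boxes. -/
def boxDiffs (d : ℕ) : Set (Set (Fin d → ℝ)) :=
  {S | ∃ A ∈ anchoredBoxes d, ∃ B ∈ anchoredBoxes d, S = B \ A}

/-- The half-open unit cube `[0,1)^d`. -/
def unitCube (d : ℕ) : Set (Fin d → ℝ) := {x | ∀ i, x i ∈ Set.Ico (0 : ℝ) 1}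

/-- `γ`-negative dependence of the indicators of the events `A 1, …, A N`. -/
def GammaNegDep {Ω : Type*} [MeasurableSpace Ω] (μ : Measure Ω) {N : ℕ}
    (γ : ℝ≥0∞) (A : Fin N → Set Ω) : Prop :=
  ∀ J : Finset (Fin N), J.Nonempty →
    μ (⋂ j ∈ J, A j) ≤ γ * ∏ j ∈ J, μ (A j) ∧
    μ (⋂ j ∈ J, (A j)ᶜ) ≤ γ * ∏ j ∈ J, μ (A j)ᶜ

/-- The `𝒮`-correlation number of a random point tuple `X`. -/
noncomputable def corrNum {Ω : Type*} [MeasurableSpace Ω] (μ : Measure Ω) {N d : ℕ}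
    (𝒮 : Set (Set (Fin d → ℝ))) (X : Fin N → Ω → Fin d → ℝ) : ℝ≥0∞ :=
  ⨆ (S : Set (Fin d → ℝ)) (_ : S ∈ 𝒮) (J : Finset (Fin N)) (_ : J.Nonempty),
    max (μ (⋂ j ∈ J, {ω | X j ω ∈ S}) / ∏ j ∈ J, μ {ω | X j ω ∈ S})
        (μ (⋂ j ∈ J, {ω | X j ω ∉ S}) / ∏ j ∈ J, μ {ω | X j ω ∉ S})

instance (N : ℕ) : MeasurableSpace (Equiv.Perm (Fin N)) := ⊤

instance (N : ℕ) : Nonempty (Equiv.Perm (Fin N)) := ⟨Equiv.refl _⟩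

/-- Value types of the sources of randomness of a Latin hypercube sample:
`d` random permutations and `N·d` random reals. -/
def lhsβ (d N : ℕ) : (Fin d ⊕ (Fin N × Fin d)) → Type :=
  fun i => Sum.elim (fun _ => Equiv.Perm (Fin N)) (fun _ => ℝ) i

noncomputable def lhsMS (d N : ℕ) : (i : Fin d ⊕ (Fin N × Fin d)) → MeasurableSpace (lhsβ d N i) :=
  fun i => match i with
  | .inl _ => ⊤
  | .inr _ => inferInstanceAs (MeasurableSpace ℝ)

def lhsFun {Ω : Type*} {d N : ℕ} (π : Fin d → Ω → Equiv.Perm (Fin N))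
    (U : Fin N → Ω → Fin d → ℝ) : (i : Fin d ⊕ (Fin N × Fin d)) → Ω → lhsβ d N i :=
  fun i => match i with
  | .inl j => π j
  | .inr p => fun ω => U p.1 ω p.2

/-- `X` is a Latin hypercube sample of `N` points in `[0,1)^d`, built from the
uniformly distributed random permutations `π_j` and the uniformly distributed
random variables `U_{n,j}`, all mutually independent. -/
def IsLHS {Ω : Type*} [MeasurableSpace Ω] (μ : Measure Ω) (d N : ℕ)
    (X : Fin N → Ω → Fin d → ℝ)
    (π : Fin d → Ω → Equiv.Perm (Fin N)) (U : Fin N → Ω → Fin d → ℝ) : Prop :=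
  (∀ j, Measure.map (π j) μ = (PMF.uniformOfFintype (Equiv.Perm (Fin N))).toMeasure) ∧
  (∀ n j, Measure.map (fun ω => U n ω j) μ = volume.restrict (Set.Ico (0 : ℝ) 1)) ∧
  iIndepFun (m := lhsMS d N) (lhsFun π U) μ ∧
  (∀ n j ω, X n ω j = (((π j ω) n : ℕ) + U n ω j) / N)

/-- An elementary interval in base `b` of order `k` in `[0,1)^d`. -/
def IsElemInterval (b d k : ℕ) (E : Set (Fin d → ℝ)) : Prop :=
  ∃ ℓ : Fin d → ℕ, ∃ a : Fin d → ℕ, (∀ i, a i < b ^ ℓ i) ∧ (∑ i, ℓ i = k) ∧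
    E = {x | ∀ i, x i ∈ Set.Ico ((a i : ℝ) / b ^ ℓ i) (((a i : ℝ) + 1) / b ^ ℓ i)}

/-- A `(t,m,d)`-net in base `b`: `b^m` points in `[0,1)^d` such that every elementary
interval of order `m - t` contains exactly `b^t` points (with multiplicity). -/
def IsNet (b d m t : ℕ) (P : Fin (b ^ m) → Fin d → ℝ) : Prop :=
  (∀ n, P n ∈ unitCube d) ∧
  ∀ E : Set (Fin d → ℝ), IsElemInterval b d (m - t) E →
    (Finset.univ.filter fun n => P n ∈ E).card = b ^ t

/-- A `b`-ary scrambling of depth `ℓ`: a self-map of `[0,1)` mapping, for each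
`k ∈ {1,…,ℓ}`, elementary intervals of order `k` into elementary intervals of order `k`,
distinct ones into distinct ones. -/
def IsScrambling (b ℓ : ℕ) (σ : ℝ → ℝ) : Prop :=
  (∀ x ∈ Set.Ico (0 : ℝ) 1, σ x ∈ Set.Ico (0 : ℝ) 1) ∧
  ∀ k, 1 ≤ k → k ≤ ℓ → ∃ f : ℕ → ℕ,
    (∀ a < b ^ k, f a < b ^ k) ∧
    (∀ a < b ^ k, ∀ a' < b ^ k, a ≠ a' → f a ≠ f a') ∧
    (∀ a < b ^ k, ∀ x ∈ Set.Ico ((a : ℝ) / b ^ k) (((a : ℝ) + 1) / b ^ k),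
      σ x ∈ Set.Ico ((f a : ℝ) / b ^ k) (((f a : ℝ) + 1) / b ^ k))

/-- A basic cube of an abstract scrambled `(t,m,d)`-net in base `b`. -/
def IsBasicCube (b d m t : ℕ) (C : Set (Fin d → ℝ)) : Prop :=
  ∃ k : Fin d → ℕ, (∀ j, k j < b ^ (m - t)) ∧
    C = {x | ∀ j, x j ∈ Set.Ico ((k j : ℝ) / b ^ (m - t)) (((k j : ℝ) + 1) / b ^ (m - t))}

/-- An abstract scrambled `(t,m,d)`-net in base `b`. -/
def IsAbstractScrambledNet {Ω : Type*} [MeasurableSpace Ω] (μ : Measure Ω)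
    (b d m t : ℕ) (Y : Fin (b ^ m) → Ω → (Fin d → ℝ)) : Prop :=
  (∀ᵐ ω ∂μ, IsNet b d m t fun n => Y n ω) ∧
  (∀ i C, IsBasicCube b d m t C → μ {ω | Y i ω ∈ C} = ((b : ℝ≥0∞) ^ (d * (m - t)))⁻¹) ∧
  (∀ M : Set (Fin d → ℝ), MeasurableSet M →
    ∀ J : Finset (Fin (b ^ m)), J.Nonempty →
    ∀ C : Fin (b ^ m) → Set (Fin d → ℝ), (∀ j ∈ J, IsBasicCube b d m t (C j)) →
      μ (⋂ j ∈ J, {ω | Y j ω ∈ C j}) ≠ 0 →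
      (μ[|⋂ j ∈ J, {ω | Y j ω ∈ C j}]) (⋂ j ∈ J, {ω | Y j ω ∈ M}) =
        ∏ j ∈ J, volume (M ∩ C j) / volume (C j))


noncomputable section Aux
open Finset

variable {Ω : Type} [MeasurableSpace Ω] {μ : Measure Ω}
variable {d : ℕ} {X : Fin d → Ω → Fin d → ℝ}
  {π : Fin d → Ω → Equiv.Perm (Fin d)} {U : Fin d → Ω → Fin d → ℝ}

lemma pi_aemeasurable (h : IsLHS μ d d X π U) (j : Fin d) : AEMeasurable (π j) μ := by
  by_contra hc
  have h0 := Measure.map_of_not_aemeasurable hc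
  rw [h.1 j] at h0
  have h1 : (PMF.uniformOfFintype (Equiv.Perm (Fin d))).toMeasure Set.univ = 1 :=
    measure_univ
  rw [h0] at h1
  simp at h1

lemma U_aemeasurable (h : IsLHS μ d d X π U) (n j : Fin d) :
    AEMeasurable (fun ω => U n ω j) μ := by
  by_contra hc
  have h0 := Measure.map_of_not_aemeasurable hc
  rw [h.2.1 n j] at h0
  have h1 : (volume.restrict (Set.Ico (0:ℝ) 1)) (Set.Ico (0:ℝ) 1) = 1 := by
    rw [Measure.restrict_apply measurableSet_Ico]
    simp
  rw [h0] at h1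
  simp at h1

lemma card_fiber_mul (d : ℕ) (hd : 0 < d) (m y : Fin d) :
    ((univ.filter fun p : Equiv.Perm (Fin d) => p m = y).card) * d = d.factorial := by
  have hall : ∀ y' : Fin d, (univ.filter fun p : Equiv.Perm (Fin d) => p m = y').card =
      (univ.filter fun p : Equiv.Perm (Fin d) => p m = y).card := by
    intro y'
    apply Finset.card_bij' (fun p _ => Equiv.swap y' y * p) (fun p _ => Equiv.swap y' y * p)
    · intro p hp
      simp only [mem_filter, mem_univ, true_and] at hp ⊢
      rw [Equiv.Perm.mul_apply, hp, Equiv.swap_apply_left]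
    · intro p hp
      simp only [mem_filter, mem_univ, true_and] at hp ⊢
      rw [Equiv.Perm.mul_apply, hp, Equiv.swap_apply_right]
    · intro p _; rw [← mul_assoc, Equiv.swap_mul_self, one_mul]
    · intro p _; rw [← mul_assoc, Equiv.swap_mul_self, one_mul]
  have hsum : (univ : Finset (Equiv.Perm (Fin d))).card =
      ∑ y' : Fin d, (univ.filter fun p : Equiv.Perm (Fin d) => p m = y').card :=
    Finset.card_eq_sum_card_fiberwise (fun p _ => mem_univ _)
  rw [Finset.card_univ, Fintype.card_perm, Fintype.card_fin] at hsum
  rw [hsum]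
  simp only [hall]
  rw [Finset.sum_const, Finset.card_univ, Fintype.card_fin, smul_eq_mul, mul_comm]

lemma meas_pi_preimage (h : IsLHS μ d d X π U) (j : Fin d)
    (s : Finset (Equiv.Perm (Fin d))) :
    μ ((π j) ⁻¹' ↑s) = (s.card : ℝ≥0∞) * ((d.factorial : ℝ≥0∞))⁻¹ := by
  rw [← Measure.map_apply_of_aemeasurable (pi_aemeasurable h j) (by trivial), h.1 j,
    PMF.toMeasure_apply_finset]
  simp [PMF.uniformOfFintype_apply, Fintype.card_perm, Fintype.card_fin, Finset.sum_const,
    nsmul_eq_mul]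

lemma meas_pi_eq (h : IsLHS μ d d X π U) (hd : 0 < d) (j : Fin d) (m y : Fin d) :
    μ ((π j) ⁻¹' {p | p m = y}) = ((d : ℝ≥0∞))⁻¹ := by
  have hset : ({p : Equiv.Perm (Fin d) | p m = y} : Set _) =
      ↑(univ.filter fun p : Equiv.Perm (Fin d) => p m = y) := by
    ext p; simp
  rw [hset, meas_pi_preimage h]
  have hc := card_fiber_mul d hd m y
  set c := (univ.filter fun p : Equiv.Perm (Fin d) => p m = y).card with hcdef
  have hc0 : c ≠ 0 := by
    intro h0
    rw [h0, zero_mul] at hc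
    exact (Nat.factorial_pos d).ne' hc.symm
  have hcast : ((c * d : ℕ) : ℝ≥0∞) = (d.factorial : ℝ≥0∞) := by
    exact_mod_cast congrArg (Nat.cast (R := ℝ≥0∞)) hc
  push_cast at hcast
  rw [← hcast, ENNReal.mul_inv (by exact Or.inl (by exact_mod_cast hc0))
      (Or.inl (ENNReal.natCast_ne_top c)), ← mul_assoc,
    ENNReal.mul_inv_cancel (by exact_mod_cast hc0) (ENNReal.natCast_ne_top c), one_mul]

lemma meas_U_preimage (h : IsLHS μ d d X π U) (n j : Fin d) {T : Set ℝ}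
    (hT : MeasurableSet T) :
    μ ((fun ω => U n ω j) ⁻¹' T) = volume (T ∩ Set.Ico (0:ℝ) 1) := by
  rw [← Measure.map_apply_of_aemeasurable (U_aemeasurable h n j) hT, h.2.1 n j,
    Measure.restrict_apply hT]

lemma meas_U_lt (h : IsLHS μ d d X π U) (n j : Fin d) {t : ℝ} (ht0 : 0 ≤ t) (ht1 : t ≤ 1) :
    μ ((fun ω => U n ω j) ⁻¹' Set.Iio t) = ENNReal.ofReal t := by
  rw [meas_U_preimage h n j measurableSet_Iio]
  have : Set.Iio t ∩ Set.Ico (0:ℝ) 1 = Set.Ico 0 t := by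
    ext x
    simp only [Set.mem_inter_iff, Set.mem_Iio, Set.mem_Ico]
    constructor
    · rintro ⟨h1, h2, h3⟩; exact ⟨h2, h1⟩
    · rintro ⟨h1, h2⟩; exact ⟨h2, h1, lt_of_lt_of_le h2 ht1⟩
  rw [this, Real.volume_Ico, sub_zero]

lemma meas_U_out (h : IsLHS μ d d X π U) (n j : Fin d) :
    μ {ω | U n ω j ∉ Set.Ico (0:ℝ) 1} = 0 := by
  have : {ω | U n ω j ∉ Set.Ico (0:ℝ) 1} = (fun ω => U n ω j) ⁻¹' (Set.Ico (0:ℝ) 1)ᶜ := rfl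
  rw [this, meas_U_preimage h n j measurableSet_Ico.compl, Set.compl_inter_self]
  exact measure_empty

lemma meas_inter_eq (hind : iIndepFun (m := lhsMS d d) (lhsFun π U) μ)
    (sP : Fin d → Set (Equiv.Perm (Fin d)))
    (J : Finset (Fin d × Fin d)) (T : Fin d × Fin d → Set ℝ)
    (hT : ∀ p, MeasurableSet (T p)) :
    μ ((⋂ j, (π j) ⁻¹' sP j) ∩ ⋂ p ∈ J, (fun ω => U p.1 ω p.2) ⁻¹' T p) =
      (∏ j, μ ((π j) ⁻¹' sP j)) * ∏ p ∈ J, μ ((fun ω => U p.1 ω p.2) ⁻¹' T p) := by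
  classical
  set F : (Fin d ⊕ (Fin d × Fin d)) → Set Ω :=
    Sum.elim (fun j => (π j) ⁻¹' sP j) (fun p => (fun ω => U p.1 ω p.2) ⁻¹' T p) with hF
  have key := hind.meas_biInter
    (S := ((univ : Finset (Fin d)).image Sum.inl ∪ J.image Sum.inr)) (s := F) ?_
  · rw [Finset.set_biInter_inter, Finset.set_biInter_finset_image,
      Finset.set_biInter_finset_image] at key
    rw [Finset.prod_union, Finset.prod_image (fun a _ b _ h => Sum.inl_injective h),
      Finset.prod_image (fun a _ b _ h => Sum.inr_injective h)] at key
    · simpa [hF] using key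
    · rw [Finset.disjoint_left]
      rintro a ha hb
      simp only [Finset.mem_image] at ha hb
      obtain ⟨x, _, rfl⟩ := ha
      obtain ⟨y, _, h⟩ := hb
      exact absurd h (by simp)
  · intro i _
    rcases i with j | p
    · exact ⟨sP j, MeasurableSpace.measurableSet_top, rfl⟩
    · exact ⟨T p, hT p, rfl⟩


/-- the difference set used in the lower bound -/
def SS (d : ℕ) (t : ℝ) : Set (Fin d → ℝ) :=
  anchoredBox (fun _ => ((d:ℝ) - 1 + t)/d) \ anchoredBox (fun _ => ((d:ℝ) - 1)/d)

lemma SS_mem_boxDiffs {d : ℕ} (hd : 2 ≤ d) {t : ℝ} (ht0 : 0 ≤ t) (ht1 : t ≤ 1) :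
    SS d t ∈ boxDiffs d := by
  have hd0 : (0:ℝ) < d := by positivity
  have hd1 : (1:ℝ) ≤ d := by exact_mod_cast Nat.one_le_of_lt hd
  refine ⟨anchoredBox (fun _ => ((d:ℝ) - 1)/d), ⟨_, fun i => ⟨?_, ?_⟩, rfl⟩,
    anchoredBox (fun _ => ((d:ℝ) - 1 + t)/d), ⟨_, fun i => ⟨?_, ?_⟩, rfl⟩, rfl⟩
  · exact div_nonneg (by linarith) hd0.le
  · rw [div_le_one hd0]; linarith
  · exact div_nonneg (by linarith) hd0.le
  · rw [div_le_one hd0]; linarith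

/-- coordinate arithmetic: characterization of one coordinate of an LHS point -/
lemma coord_characterization {d : ℕ} {l : Fin d} (hl : (l : ℕ) + 1 = d)
    {t u : ℝ} (ht0 : 0 < t) (ht1 : t ≤ 1) (hu0 : 0 ≤ u) (hu1 : u < 1) (k : Fin d) :
    (0 ≤ ((k:ℕ) + u)/d) ∧
    (((k:ℕ) + u)/d < ((d:ℝ) - 1)/d ↔ k ≠ l) ∧
    (((k:ℕ) + u)/d < ((d:ℝ) - 1 + t)/d ↔ (k ≠ l ∨ u < t)) := by
  have hd0 : (0:ℝ) < d := by exact_mod_cast l.pos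
  have hkd : (k:ℕ) < d := k.isLt
  have hdl : ((d:ℝ) - 1) = ((l:ℕ):ℝ) := by
    have : ((l:ℕ):ℝ) + 1 = d := by exact_mod_cast hl
    linarith
  refine ⟨div_nonneg (add_nonneg (Nat.cast_nonneg _) hu0) hd0.le, ?_, ?_⟩
  · rw [div_lt_div_iff_of_pos_right hd0, hdl]
    rcases eq_or_ne k l with rfl | hne
    · simp only [ne_eq, not_true_eq_false, iff_false, not_lt]; linarith
    · simp only [ne_eq, hne, not_false_eq_true, iff_true]
      have hkl : (k:ℕ) < (l:ℕ) := by
        have := Fin.val_ne_of_ne hne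
        omega
      have : ((k:ℕ):ℝ) + 1 ≤ ((l:ℕ):ℝ) := by exact_mod_cast hkl
      linarith
  · rw [div_lt_div_iff_of_pos_right hd0, hdl]
    rcases eq_or_ne k l with rfl | hne
    · simp only [ne_eq, not_true_eq_false, false_or]

      constructor
      · intro h; linarith
      · intro h; linarith
    · simp only [hne, ne_eq, not_false_eq_true, true_or, iff_true]
      have hkl : (k:ℕ) < (l:ℕ) := by
        have := Fin.val_ne_of_ne hne
        omega
      have : ((k:ℕ):ℝ) + 1 ≤ ((l:ℕ):ℝ) := by exact_mod_cast hkl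
      linarith

/-- membership in SS characterized through the permutations and uniforms -/
lemma mem_SS_iff {Ω : Type} {d : ℕ} {X : Fin d → Ω → Fin d → ℝ}
    {π : Fin d → Ω → Equiv.Perm (Fin d)} {U : Fin d → Ω → Fin d → ℝ}
    (hX : ∀ n j ω, X n ω j = (((π j ω) n : ℕ) + U n ω j) / d)
    {l : Fin d} (hl : (l : ℕ) + 1 = d)
    {t : ℝ} (ht0 : 0 < t) (ht1 : t ≤ 1) (n : Fin d) (ω : Ω)
    (hG : ∀ j, U n ω j ∈ Set.Ico (0:ℝ) 1) :
    (X n ω ∈ SS d t) ↔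
      ((∃ j, π j ω n = l) ∧ ∀ j, π j ω n = l → U n ω j < t) := by
  have hchar := fun j => coord_characterization hl ht0 ht1 (hG j).1 (hG j).2 (π j ω n)
  simp only [SS, Set.mem_diff, anchoredBox, Set.mem_setOf_eq, Set.mem_Ico]
  constructor
  · rintro ⟨hB, hA⟩
    push_neg at hA
    constructor
    · obtain ⟨i, hi⟩ := hA
      have h0 : (0:ℝ) ≤ X n ω i := by rw [hX]; exact (hchar i).1
      have h1 := hi h0
      rw [hX n i ω] at h1
      refine ⟨i, ?_⟩
      by_contra hne
      exact absurd (((hchar i).2.1).2 hne) (not_lt.2 h1)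
    · intro j hj
      have := (hB j).2
      rw [hX n j ω] at this
      rcases ((hchar j).2.2).1 this with h | h
      · exact absurd hj h
      · exact h
  · rintro ⟨⟨i, hi⟩, hall⟩
    constructor
    · intro j
      rw [hX n j ω]
      refine ⟨(hchar j).1, ((hchar j).2.2).2 ?_⟩
      by_cases hj : π j ω n = l
      · exact Or.inr (hall j hj)
      · exact Or.inl hj
    · intro hA
      have := (hA i).2
      rw [hX n i ω] at this
      exact absurd hi (((hchar i).2.1).1 this)


def Gset {Ω : Type} {d : ℕ} (U : Fin d → Ω → Fin d → ℝ) : Set Ω :=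
  ⋂ (n : Fin d), ⋂ (j : Fin d), (fun ω => U n ω j) ⁻¹' Set.Ico (0:ℝ) 1

lemma meas_Gc (h : IsLHS μ d d X π U) : μ (Gset U)ᶜ = 0 := by
  rw [Gset]
  simp only [Set.compl_iInter]
  exact measure_iUnion_null fun n => measure_iUnion_null fun j => meas_U_out h n j

lemma mem_Gset {Ω : Type} {d : ℕ} {U : Fin d → Ω → Fin d → ℝ} {ω : Ω} (hω : ω ∈ Gset U)
    (n j : Fin d) : U n ω j ∈ Set.Ico (0:ℝ) 1 := by
  simp only [Gset, Set.mem_iInter] at hω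
  exact hω n j

lemma G_nullMeasurable (h : IsLHS μ d d X π U) : NullMeasurableSet (Gset U) μ :=
  NullMeasurableSet.iInter fun n => NullMeasurableSet.iInter fun j =>
    (U_aemeasurable h n j).nullMeasurable measurableSet_Ico

lemma meas_inter_ge (h : IsLHS μ d d X π U) {l : Fin d} (hl : (l:ℕ)+1 = d)
    {t : ℝ} (ht0 : 0 < t) (ht1 : t ≤ 1) :
    (d.factorial : ℝ≥0∞) * (((d:ℝ≥0∞))⁻¹ ^ d * ENNReal.ofReal t ^ d) ≤
      μ (⋂ n ∈ (univ : Finset (Fin d)), {ω | X n ω ∈ SS d t}) := by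
  classical
  have hd0 : 0 < d := l.pos
  set D : Equiv.Perm (Fin d) → Set Ω := fun σ => (⋂ j, (π j) ⁻¹' {p | p (σ j) = l}) with hD
  set W : Equiv.Perm (Fin d) → Set Ω :=
    fun σ => ⋂ j, (fun ω => U (σ j) ω j) ⁻¹' Set.Iio t with hW
  have hsub : ∀ σ : Equiv.Perm (Fin d),
      D σ ∩ W σ ∩ Gset U ⊆ ⋂ n ∈ (univ : Finset (Fin d)), {ω | X n ω ∈ SS d t} := by
    rintro σ ω ⟨⟨hDω, hWω⟩, hGω⟩
    have hDj : ∀ j, π j ω (σ j) = l := by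
      intro j
      have := Set.mem_iInter.1 hDω j
      simpa using this
    have hWj : ∀ j, U (σ j) ω j < t := by
      intro j
      have := Set.mem_iInter.1 hWω j
      simpa using this
    simp only [Set.mem_iInter]
    intro n _
    rw [Set.mem_setOf_eq, mem_SS_iff h.2.2.2 hl ht0 ht1 n ω (mem_Gset hGω n)]
    constructor
    · refine ⟨σ.symm n, ?_⟩
      have h3 := hDj (σ.symm n)
      rwa [σ.apply_symm_apply n] at h3
    · intro j hj
      have hsn : σ j = n := (π j ω).injective ((hDj j).trans hj.symm)
      rw [← hsn]
      exact hWj j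
  have hdisj : Set.Pairwise (↑(univ : Finset (Equiv.Perm (Fin d))))
      (Function.onFun (AEDisjoint μ) (fun σ => D σ ∩ W σ ∩ Gset U)) := by
    intro σ _ τ hne2 hne
    refine Disjoint.aedisjoint (Set.disjoint_left.2 ?_)
    rintro ω ⟨⟨hDσ, _⟩, _⟩ ⟨⟨hDτ, _⟩, _⟩
    apply hne
    apply Equiv.ext
    intro j
    have h1 : π j ω (σ j) = l := by simpa using Set.mem_iInter.1 hDσ j
    have h2 : π j ω (τ j) = l := by simpa using Set.mem_iInter.1 hDτ j
    exact (π j ω).injective (h1.trans h2.symm)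
  have hnm : ∀ σ : Equiv.Perm (Fin d), NullMeasurableSet (D σ ∩ W σ ∩ Gset U) μ := by
    intro σ
    refine NullMeasurableSet.inter (NullMeasurableSet.inter ?_ ?_) (G_nullMeasurable h)
    · exact NullMeasurableSet.iInter fun j =>
        (pi_aemeasurable h j).nullMeasurable MeasurableSpace.measurableSet_top
    · exact NullMeasurableSet.iInter fun j =>
        (U_aemeasurable h (σ j) j).nullMeasurable measurableSet_Iio
  have hval : ∀ σ : Equiv.Perm (Fin d),
      μ (D σ ∩ W σ ∩ Gset U) = ((d:ℝ≥0∞))⁻¹ ^ d * ENNReal.ofReal t ^ d := by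
    intro σ
    rw [measure_inter_conull (meas_Gc h)]
    have hWre : W σ = ⋂ p ∈ ((univ : Finset (Fin d)).image fun j => (σ j, j)),
        (fun ω => U p.1 ω p.2) ⁻¹' Set.Iio t := by
      rw [Finset.set_biInter_finset_image]
      ext ω; simp [hW, Set.mem_iInter]
    rw [hWre, meas_inter_eq h.2.2.1 _ _ _ (fun _ => measurableSet_Iio)]
    have hinj : ∀ a ∈ (univ : Finset (Fin d)), ∀ b ∈ univ,
        (fun j => (σ j, j)) a = (fun j => (σ j, j)) b → a = b := by
      intro a _ b _ hab
      simpa using congrArg Prod.snd hab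
    rw [Finset.prod_image hinj]
    have h1 : ∀ j, μ ((π j) ⁻¹' {p | p (σ j) = l}) = ((d:ℝ≥0∞))⁻¹ :=
      fun j => meas_pi_eq h hd0 j (σ j) l
    have h2 : ∀ j : Fin d, μ ((fun ω => U (σ j) ω j) ⁻¹' Set.Iio t) = ENNReal.ofReal t :=
      fun j => meas_U_lt h (σ j) j ht0.le ht1
    simp only [h1, h2]
    rw [Finset.prod_const, Finset.prod_const, Finset.card_univ, Fintype.card_fin]
  calc (d.factorial : ℝ≥0∞) * (((d:ℝ≥0∞))⁻¹ ^ d * ENNReal.ofReal t ^ d)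
      = ∑ σ : Equiv.Perm (Fin d), μ (D σ ∩ W σ ∩ Gset U) := by
        simp only [hval]
        rw [Finset.sum_const, Finset.card_univ, Fintype.card_perm, Fintype.card_fin,
          nsmul_eq_mul]
    _ = μ (⋃ σ ∈ (univ : Finset (Equiv.Perm (Fin d))), (D σ ∩ W σ ∩ Gset U)) :=
        (measure_biUnion_finset₀ hdisj (fun σ _ => hnm σ)).symm
    _ ≤ μ (⋂ n ∈ (univ : Finset (Fin d)), {ω | X n ω ∈ SS d t}) :=
        measure_mono (Set.iUnion₂_subset fun σ _ => hsub σ)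

lemma sum_ite_l {d : ℕ} (hd0 : 0 < d) (l : Fin d) (τ : ℝ≥0∞) :
    ∑ x : Fin d, (if x = l then τ else 1) = τ + ((d-1:ℕ) : ℝ≥0∞) := by
  classical
  rw [Finset.sum_ite, Finset.filter_eq', if_pos (Finset.mem_univ l)]
  rw [Finset.sum_const, Finset.sum_const, Finset.card_singleton]
  have : (Finset.univ.filter fun x : Fin d => ¬ x = l) = Finset.univ.erase l := by
    ext x; simp [Finset.mem_erase, and_comm]
  rw [this, Finset.card_erase_of_mem (Finset.mem_univ l), Finset.card_univ, Fintype.card_fin]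
  simp

lemma meas_point_le (h : IsLHS μ d d X π U) {l : Fin d} (hl : (l:ℕ)+1 = d)
    {t : ℝ} (ht0 : 0 < t) (ht1 : t ≤ 1) (n : Fin d) :
    μ {ω | X n ω ∈ SS d t} ≤
      ((d:ℝ≥0∞))⁻¹ ^ d * ((d:ℝ≥0∞) * ENNReal.ofReal t *
        (ENNReal.ofReal t + ((d-1 : ℕ) : ℝ≥0∞)) ^ (d-1)) := by
  classical
  have hd0 : 0 < d := l.pos
  set τ := ENNReal.ofReal t with hτ
  set V : Finset (Fin d → Fin d) := Finset.univ.filter (fun v => ∃ j, v j = l) with hV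
  set Dv : (Fin d → Fin d) → Set Ω := fun v => ⋂ j, (π j) ⁻¹' {p | p n = v j} with hDv
  set Wv : (Fin d → Fin d) → Set Ω := fun v =>
    ⋂ p ∈ ((Finset.univ.filter fun j => v j = l).image fun j => (n, j)),
      (fun ω => U p.1 ω p.2) ⁻¹' Set.Iio t with hWv
  set w : (Fin d → Fin d) → ℝ≥0∞ := fun v => ∏ j, (if v j = l then τ else 1) with hw
  have hcover : {ω | X n ω ∈ SS d t} ∩ Gset U ⊆ ⋃ v ∈ V, (Dv v ∩ Wv v) := by
    rintro ω ⟨hSω, hGω⟩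
    rw [Set.mem_setOf_eq, mem_SS_iff h.2.2.2 hl ht0 ht1 n ω (mem_Gset hGω n)] at hSω
    obtain ⟨⟨j0, hj0⟩, hall⟩ := hSω
    refine Set.mem_iUnion₂.2 ⟨fun j => π j ω n, ?_, ?_, ?_⟩
    · rw [hV, Finset.mem_filter]
      exact ⟨Finset.mem_univ _, ⟨j0, hj0⟩⟩
    · exact Set.mem_iInter.2 fun j => rfl
    · rw [hWv]
      simp only [Set.mem_iInter]
      intro p hp
      simp only [Finset.mem_image, Finset.mem_filter] at hp
      obtain ⟨j, ⟨_, hjl⟩, rfl⟩ := hp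
      exact hall j hjl
  have hval : ∀ v : Fin d → Fin d, μ (Dv v ∩ Wv v) = ((d:ℝ≥0∞))⁻¹ ^ d * w v := by
    intro v
    rw [hDv, hWv, meas_inter_eq h.2.2.1 _ _ _ (fun _ => measurableSet_Iio)]
    have hinj : ∀ a ∈ (Finset.univ.filter fun j => v j = l), ∀ b ∈ (Finset.univ.filter fun j => v j = l),
        (fun j => ((n:Fin d), j)) a = (fun j => (n, j)) b → a = b := by
      intro a _ b _ hab
      simpa using congrArg Prod.snd hab
    rw [Finset.prod_image hinj]
    have h1 : ∀ j, μ ((π j) ⁻¹' {p | p n = v j}) = ((d:ℝ≥0∞))⁻¹ :=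
      fun j => meas_pi_eq h hd0 j n (v j)
    simp only [h1]
    rw [Finset.prod_const, Finset.card_univ, Fintype.card_fin]
    congr 1
    calc ∏ j ∈ Finset.univ.filter (fun j => v j = l),
          μ ((fun ω => U (n, j).1 ω (n, j).2) ⁻¹' Set.Iio t)
        = ∏ j ∈ Finset.univ.filter (fun j => v j = l), τ := by
          refine Finset.prod_congr rfl fun j _ => ?_
          exact meas_U_lt h n j ht0.le ht1
      _ = w v := by rw [Finset.prod_filter]
  have hsum : ∑ v ∈ V, w v ≤ (d:ℝ≥0∞) * (τ * (τ + ((d-1:ℕ) : ℝ≥0∞)) ^ (d-1)) := by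
    have hstep1 : ∀ v ∈ V, w v ≤ ∑ j, (if v j = l then w v else 0) := by
      intro v hv
      rw [hV, Finset.mem_filter] at hv
      obtain ⟨_, j0, hj0⟩ := hv
      have h2 := Finset.single_le_sum (f := fun j => if v j = l then w v else 0)
        (fun i _ => zero_le) (Finset.mem_univ j0)
      exact le_trans (le_of_eq (if_pos hj0).symm) h2
    calc ∑ v ∈ V, w v ≤ ∑ v ∈ V, ∑ j, (if v j = l then w v else 0) :=
          Finset.sum_le_sum hstep1
      _ ≤ ∑ v : Fin d → Fin d, ∑ j, (if v j = l then w v else 0) :=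
          Finset.sum_le_sum_of_subset (Finset.filter_subset _ _)
      _ = ∑ j : Fin d, ∑ v : Fin d → Fin d, (if v j = l then w v else 0) := Finset.sum_comm
      _ = ∑ j : Fin d, (τ * (τ + ((d-1:ℕ) : ℝ≥0∞)) ^ (d-1)) := by
          refine Finset.sum_congr rfl fun j _ => ?_
          set Gj : Fin d → Fin d → ℝ≥0∞ := fun i x => if i = j then (if x = l then τ else 0)
            else (if x = l then τ else 1) with hGj
          have hrw : ∀ v : Fin d → Fin d, (if v j = l then w v else 0) = ∏ i, Gj i (v i) := by
            intro v
            by_cases hvj : v j = l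
            · rw [if_pos hvj, hw]
              refine Finset.prod_congr rfl fun i _ => ?_
              by_cases hij : i = j
              · subst hij; simp [hGj, hvj]
              · simp [hGj, hij]
            · rw [if_neg hvj]
              refine (Finset.prod_eq_zero (Finset.mem_univ j) ?_).symm
              simp [hGj, hvj]
          simp only [hrw]
          rw [← Fintype.prod_sum]
          rw [← Finset.mul_prod_erase Finset.univ _ (Finset.mem_univ j)]
          have hj1 : ∑ x : Fin d, Gj j x = τ := by
            simp [hGj]
          have hj2 : ∀ i ∈ Finset.univ.erase j, ∑ x : Fin d, Gj i x
              = τ + ((d-1:ℕ) : ℝ≥0∞) := by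
            intro i hi
            have hij : i ≠ j := (Finset.mem_erase.1 hi).1
            simp only [hGj, if_neg hij]
            exact sum_ite_l hd0 l τ
          rw [hj1, Finset.prod_congr rfl hj2, Finset.prod_const,
            Finset.card_erase_of_mem (Finset.mem_univ j), Finset.card_univ, Fintype.card_fin]
      _ = (d:ℝ≥0∞) * (τ * (τ + ((d-1:ℕ) : ℝ≥0∞)) ^ (d-1)) := by
          rw [Finset.sum_const, Finset.card_univ, Fintype.card_fin, nsmul_eq_mul]
  calc μ {ω | X n ω ∈ SS d t} = μ ({ω | X n ω ∈ SS d t} ∩ Gset U) :=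
        (measure_inter_conull (meas_Gc h)).symm
    _ ≤ μ (⋃ v ∈ V, (Dv v ∩ Wv v)) := measure_mono hcover
    _ ≤ ∑ v ∈ V, μ (Dv v ∩ Wv v) := measure_biUnion_finset_le _ _
    _ = ∑ v ∈ V, ((d:ℝ≥0∞))⁻¹ ^ d * w v := Finset.sum_congr rfl fun v _ => hval v
    _ = ((d:ℝ≥0∞))⁻¹ ^ d * ∑ v ∈ V, w v := by rw [Finset.mul_sum]
    _ ≤ ((d:ℝ≥0∞))⁻¹ ^ d * ((d:ℝ≥0∞) * (τ * (τ + ((d-1:ℕ) : ℝ≥0∞)) ^ (d-1))) :=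
        mul_le_mul_right hsum _
    _ = ((d:ℝ≥0∞))⁻¹ ^ d * ((d:ℝ≥0∞) * τ * (τ + ((d-1:ℕ) : ℝ≥0∞)) ^ (d-1)) := by
        rw [mul_assoc]

/-- the explicit lower bound for the correlation number of a `d`-point LHS in dimension `d` -/
noncomputable def rhoLHS (d : ℕ) : ℝ :=
  ((d.factorial : ℝ) * ((d:ℝ)⁻¹)^d * (((d:ℝ)^2)⁻¹)^d) /
    (((d:ℝ)⁻¹)^d * ((d:ℝ) * ((d:ℝ)^2)⁻¹ *
      ((((d:ℝ)^2)⁻¹ + ((d-1:ℕ):ℝ))^(d-1))))^d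

lemma corrNum_ge (h : IsLHS μ d d X π U) (hd : 2 ≤ d) :
    ENNReal.ofReal (rhoLHS d) ≤ corrNum μ (boxDiffs d) X := by
  classical
  have hd0 : (0:ℝ) < d := by positivity
  set t : ℝ := ((d:ℝ)^2)⁻¹ with hts
  have ht0 : 0 < t := by positivity
  have hd2 : (2:ℝ) ≤ d := by exact_mod_cast hd
  have ht1 : t ≤ 1 := by
    rw [hts]
    rw [inv_le_one_iff₀]
    right
    nlinarith
  set l : Fin d := ⟨d-1, by omega⟩ with hls
  have hl : (l:ℕ) + 1 = d := by simp [hls]; omega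
  set τ := ENNReal.ofReal t with hτ
  set DENf : ℝ≥0∞ := ((d:ℝ≥0∞))⁻¹ ^ d * ((d:ℝ≥0∞) * τ *
    (τ + ((d-1 : ℕ) : ℝ≥0∞)) ^ (d-1)) with hDENf
  have hofd : ENNReal.ofReal ((d:ℝ)⁻¹) = ((d:ℝ≥0∞))⁻¹ := by
    rw [ENNReal.ofReal_inv_of_pos hd0, ENNReal.ofReal_natCast]
  have hNUM : ENNReal.ofReal ((d.factorial : ℝ) * ((d:ℝ)⁻¹)^d * t^d) =
      (d.factorial : ℝ≥0∞) * (((d:ℝ≥0∞))⁻¹ ^ d * τ ^ d) := by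
    rw [ENNReal.ofReal_mul (by positivity), ENNReal.ofReal_mul (by positivity),
      ENNReal.ofReal_pow (by positivity), ENNReal.ofReal_pow ht0.le,
      ENNReal.ofReal_natCast, hofd, mul_assoc]
  have hDEN : ENNReal.ofReal ((((d:ℝ)⁻¹)^d * ((d:ℝ) * t *
      ((t + ((d-1:ℕ):ℝ))^(d-1))))^d) = DENf ^ d := by
    rw [ENNReal.ofReal_pow (by positivity), hDENf]
    congr 1
    rw [ENNReal.ofReal_mul (by positivity), ENNReal.ofReal_pow (by positivity), hofd,
      ENNReal.ofReal_mul (by positivity), ENNReal.ofReal_mul (by positivity),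
      ENNReal.ofReal_pow (by positivity), ENNReal.ofReal_add ht0.le (by positivity),
      ENNReal.ofReal_natCast, ENNReal.ofReal_natCast]
  have hrho : ENNReal.ofReal (rhoLHS d) =
      ((d.factorial : ℝ≥0∞) * (((d:ℝ≥0∞))⁻¹ ^ d * τ ^ d)) / DENf ^ d := by
    rw [rhoLHS, ENNReal.ofReal_div_of_pos (by positivity), hNUM, hDEN]
  have hprodle : ∏ n ∈ (univ : Finset (Fin d)), μ {ω | X n ω ∈ SS d t} ≤ DENf ^ d := by
    calc ∏ n ∈ (univ : Finset (Fin d)), μ {ω | X n ω ∈ SS d t}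
        ≤ ∏ _n ∈ (univ : Finset (Fin d)), DENf :=
          Finset.prod_le_prod' fun n _ => meas_point_le h hl ht0 ht1 n
      _ = DENf ^ d := by rw [Finset.prod_const, Finset.card_univ, Fintype.card_fin]
  have hmain : ENNReal.ofReal (rhoLHS d) ≤
      μ (⋂ n ∈ (univ : Finset (Fin d)), {ω | X n ω ∈ SS d t}) /
        ∏ n ∈ (univ : Finset (Fin d)), μ {ω | X n ω ∈ SS d t} := by
    rw [hrho]
    exact ENNReal.div_le_div (meas_inter_ge h hl ht0 ht1) hprodle
  refine le_trans hmain ?_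
  have hmem := SS_mem_boxDiffs hd ht0.le ht1
  have hne : (univ : Finset (Fin d)).Nonempty := ⟨⟨0, by omega⟩, Finset.mem_univ _⟩
  simp only [corrNum]
  refine le_iSup_of_le (SS d t) (le_iSup_of_le hmem (le_iSup_of_le (univ : Finset (Fin d))
    (le_iSup_of_le hne (le_max_left _ _))))

end Aux

section Analysis
open Topology Filter Real
noncomputable def cseq (d : ℕ) : ℝ := 1 - (d:ℝ)⁻¹ + ((d:ℝ)⁻¹)^3

noncomputable def hseq (d : ℕ) : ℝ := d + ((d:ℝ) - 1) * d * Real.log (cseq d)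

lemma cseq_pos {d : ℕ} (hd : 2 ≤ d) : 0 < cseq d := by
  have hd2 : (2:ℝ) ≤ d := by exact_mod_cast hd
  have h1 : (d:ℝ)⁻¹ ≤ 1/2 := by
    rw [inv_le_comm₀ (by linarith) (by norm_num)]
    linarith
  have h0 : 0 < (d:ℝ)⁻¹ := by positivity
  have h3 : ((d:ℝ)⁻¹)^3 > 0 := by positivity
  unfold cseq; nlinarith

lemma rhoLHS_eq {d : ℕ} (hd : 2 ≤ d) :
    rhoLHS d = (d.factorial : ℝ) * ((d:ℝ)⁻¹)^d * ((cseq d ^ ((d-1)*d))⁻¹) := by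
  have hd0 : (0:ℝ) < d := by positivity
  have hc0 : 0 < cseq d := cseq_pos hd
  have ht0 : (0:ℝ) < ((d:ℝ)^2)⁻¹ := by positivity
  set t : ℝ := ((d:ℝ)^2)⁻¹ with hts
  set c : ℝ := cseq d with hcs
  have hca : t + ((d-1:ℕ):ℝ) = (d:ℝ) * c := by
    have h1 : ((d-1:ℕ):ℝ) = (d:ℝ) - 1 := by
      rw [Nat.cast_sub (by omega)]; simp
    rw [h1, hts, hcs, cseq]
    field_simp
    ring
  have hbase : ((d:ℝ)⁻¹)^d * ((d:ℝ) * t * ((t + ((d-1:ℕ):ℝ))^(d-1))) = t * c^(d-1) := by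
    rw [hca, mul_pow]
    have hdd : (d:ℝ) * (d:ℝ)^(d-1) = (d:ℝ)^d := by
      rw [← pow_succ']
      congr 1
      omega
    have h1 : ((d:ℝ)⁻¹)^d * (d:ℝ)^d = 1 := by
      rw [← mul_pow, inv_mul_cancel₀ hd0.ne', one_pow]
    calc ((d:ℝ)⁻¹)^d * ((d:ℝ) * t * ((d:ℝ)^(d-1) * c^(d-1)))
        = (((d:ℝ)⁻¹)^d * ((d:ℝ) * (d:ℝ)^(d-1))) * (t * c^(d-1)) := by ring
      _ = t * c^(d-1) := by rw [hdd, h1, one_mul]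
  rw [rhoLHS, hbase]
  rw [mul_pow, ← pow_mul]
  have htd : t^d ≠ 0 := by positivity
  rw [mul_comm (t^d) (c^((d-1)*d)), mul_div_mul_right _ _ htd, div_eq_mul_inv]

lemma rho_div_sqrt {d : ℕ} (hd : 2 ≤ d) :
    rhoLHS d / Real.sqrt d =
      Stirling.stirlingSeq d * Real.sqrt 2 * Real.exp (-(hseq d)) := by
  have hd0 : (0:ℝ) < d := by positivity
  have hc0 : 0 < cseq d := cseq_pos hd
  have hm : (((d-1)*d : ℕ):ℝ) = ((d:ℝ)-1) * d := by
    push_cast [Nat.cast_sub (show 1 ≤ d by omega)]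
    ring
  have hexp : Real.exp (-(hseq d)) = (Real.exp 1 ^ d)⁻¹ * ((cseq d) ^ ((d-1)*d))⁻¹ := by
    rw [hseq, neg_add, Real.exp_add]
    congr 1
    · rw [Real.exp_neg]
      congr 1
      have h7 := Real.exp_nat_mul 1 d
      rw [mul_one] at h7
      exact h7
    · rw [← hm, ← Real.log_pow, Real.exp_neg, Real.exp_log (pow_pos hc0 _)]
  rw [rhoLHS_eq hd, Stirling.stirlingSeq, hexp]
  have hsq2 : Real.sqrt (2 * d) = Real.sqrt 2 * Real.sqrt d := Real.sqrt_mul (by norm_num) _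
  rw [hsq2, div_pow, inv_pow]
  set F := (d.factorial : ℝ) with hF
  set s := Real.sqrt d with hs
  set r := Real.sqrt 2 with hr
  set a := ((d:ℝ))^d with ha
  set E := Real.exp 1 ^ d with hE
  set C := (cseq d ^ ((d-1)*d))⁻¹ with hC
  have h1 : s ≠ 0 := by rw [hs]; positivity
  have h2 : r ≠ 0 := by rw [hr]; positivity
  have h3 : E ≠ 0 := by rw [hE]; positivity
  have h4 : a ≠ 0 := by rw [ha]; positivity
  field_simp

set_option maxHeartbeats 2000000 in
lemma hseq_tendsto : Tendsto (fun d : ℕ => hseq d) atTop (𝓝 (1/2)) := by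
  have key : ∀ d : ℕ, 2 ≤ d → |hseq d - 1/2| ≤ 6 / d := by
    intro d hd
    have hd0 : (0:ℝ) < d := by positivity
    have hd2 : (2:ℝ) ≤ d := by exact_mod_cast hd
    obtain ⟨v, hv⟩ : ∃ v : ℝ, v = ((d:ℝ))⁻¹ := ⟨_, rfl⟩
    have hv0 : 0 < v := by rw [hv]; positivity
    have hv2 : v ≤ 1/2 := by
      rw [hv, inv_le_comm₀ hd0 (by norm_num)]
      linarith
    have hsq : v^2 ≤ 1/4 := by nlinarith
    have hcube : v^3 ≤ v/4 := by nlinarith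
    have hv3 : 0 < v^3 := by positivity
    obtain ⟨x, hx⟩ : ∃ x : ℝ, x = v - v^3 := ⟨_, rfl⟩
    have hx0 : 0 < x := by rw [hx]; linarith
    have hxv : x ≤ v := by rw [hx]; linarith
    have hx2 : x ≤ 1/2 := le_trans hxv hv2
    have hc : cseq d = 1 - x := by rw [cseq, hx, hv]; ring
    have habs : |x| < 1 := by rw [abs_of_pos hx0]; linarith
    have hlog := Real.abs_log_sub_add_sum_range_le habs 2
    have hsum : (∑ i ∈ Finset.range 2, x ^ (i + 1) / (i + 1)) = x + x^2/2 := by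
      simp [Finset.sum_range_succ]
      ring
    rw [hsum] at hlog
    -- hlog : |x + x^2/2 + log (1-x)| ≤ |x|^3 / (1 - |x|)
    have hE : |Real.log (cseq d) + (x + x^2/2)| ≤ 2 * v^3 := by
      rw [hc]
      have h1 : |x|^3 / (1 - |x|) ≤ 2 * v^3 := by
        rw [abs_of_pos hx0]
        have h2 : (1:ℝ) - x ≥ 1/2 := by linarith
        have h3 : x^3 ≤ v^3 := pow_le_pow_left₀ hx0.le hxv 3
        rw [div_le_iff₀ (by linarith)]
        nlinarith
      calc |Real.log (1-x) + (x + x^2/2)| = |x + x^2/2 + Real.log (1-x)| := by ring_nf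
        _ ≤ |x|^3 / (1 - |x|) := hlog
        _ ≤ 2 * v^3 := h1
    clear hlog hsum habs
    -- main decomposition
    have hvd : (d:ℝ) = v⁻¹ := by rw [hv, inv_inv]
    have hA : (d:ℝ) - ((d:ℝ)-1) * d * (x + x^2/2) =
        1/2 + (3/2)*v - v^3 - v^4/2 + v^5/2 := by
      rw [hx, hvd]
      field_simp [hv0.ne']
      ring
    have hfact : ((d:ℝ)-1) * d * v^3 ≤ v := by
      have : ((d:ℝ)-1) * d ≤ (d:ℝ)^2 := by nlinarith
      have hveq : v^3 * (d:ℝ)^2 = v := by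
        rw [hv]; field_simp
      nlinarith
    have hdecomp : hseq d - 1/2 =
        ((3/2)*v - v^3 - v^4/2 + v^5/2) +
          ((d:ℝ)-1) * d * (Real.log (cseq d) + (x + x^2/2)) := by
      rw [hseq]
      have : ((d:ℝ)-1) * d * Real.log (cseq d) =
          ((d:ℝ)-1) * d * (Real.log (cseq d) + (x + x^2/2)) - ((d:ℝ)-1)*d*(x + x^2/2) := by
        ring
      rw [this]
      linear_combination hA
    rw [hdecomp]
    have hmul1 : v * v ≤ v * (1/2) := mul_le_mul_of_nonneg_left hv2 hv0.le
    have h4 : v^4 ≤ v/4 := by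
      calc v^4 = v * v^3 := by ring
        _ ≤ v * (v/4) := mul_le_mul_of_nonneg_left hcube hv0.le
        _ = (v*v)/4 := by ring
        _ ≤ (v*(1/2))/4 := by linarith
        _ ≤ v/4 := by linarith
    have h5 : v^5 ≤ v/4 := by
      calc v^5 = v * v^4 := by ring
        _ ≤ v * (v/4) := mul_le_mul_of_nonneg_left h4 hv0.le
        _ = (v*v)/4 := by ring
        _ ≤ (v*(1/2))/4 := by linarith
        _ ≤ v/4 := by linarith
    have hv4 : (0:ℝ) ≤ v^4 := by positivity
    have hv5 : (0:ℝ) ≤ v^5 := by positivity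
    have hb1 : |(3/2)*v - v^3 - v^4/2 + v^5/2| ≤ 4 * v := by
      rw [abs_le]
      constructor <;> linarith
    have hb2 : |((d:ℝ)-1) * d * (Real.log (cseq d) + (x + x^2/2))| ≤ 2 * v := by
      rw [abs_mul]
      have hdd0 : (0:ℝ) ≤ ((d:ℝ)-1) * d := mul_nonneg (by linarith) hd0.le
      have hdd : |((d:ℝ)-1) * d| = ((d:ℝ)-1)*d := abs_of_nonneg hdd0
      rw [hdd]
      calc ((d:ℝ)-1)*d * |Real.log (cseq d) + (x + x^2/2)|
          ≤ ((d:ℝ)-1)*d * (2 * v^3) := by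
            apply mul_le_mul_of_nonneg_left hE hdd0
        _ = 2 * (((d:ℝ)-1) * d * v^3) := by ring
        _ ≤ 2 * v := by linarith [hfact]
    calc |(3/2)*v - v^3 - v^4/2 + v^5/2 +
          ((d:ℝ)-1) * d * (Real.log (cseq d) + (x + x^2/2))| ≤
        |(3/2)*v - v^3 - v^4/2 + v^5/2| +
          |((d:ℝ)-1) * d * (Real.log (cseq d) + (x + x^2/2))| := abs_add_le _ _
      _ ≤ 4*v + 2*v := add_le_add hb1 hb2
      _ = 6 * v := by ring
      _ = 6 / d := by rw [hv]; ring
  have h0 : Tendsto (fun d : ℕ => hseq d - 1/2) atTop (𝓝 0) := by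
    refine squeeze_zero_norm' ?_ (tendsto_const_div_atTop_nhds_zero_nat 6)
    filter_upwards [eventually_ge_atTop 2] with d hd
    exact key d hd
  have h1 : Tendsto (fun d : ℕ => (hseq d - 1/2) + 1/2) atTop (𝓝 (0 + 1/2)) :=
    h0.add tendsto_const_nhds
  simpa using h1

lemma rho_tendsto :
    Tendsto (fun d : ℕ => rhoLHS d / Real.sqrt d) atTop
      (𝓝 (Real.sqrt (2 * Real.pi / Real.exp 1))) := by
  have hval : Real.sqrt π * Real.sqrt 2 * Real.exp (-(1/2 : ℝ)) =
      Real.sqrt (2 * Real.pi / Real.exp 1) := by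
    rw [Real.sqrt_div (by positivity) (Real.exp 1), Real.sqrt_mul (by norm_num) π,
      Real.sqrt_eq_rpow (Real.exp 1), Real.exp_one_rpow, Real.exp_neg]
    rw [div_eq_mul_inv]
    ring
  have h1 : Tendsto (fun d : ℕ => Stirling.stirlingSeq d * Real.sqrt 2 *
      Real.exp (-(hseq d))) atTop (𝓝 (Real.sqrt π * Real.sqrt 2 * Real.exp (-(1/2:ℝ)))) := by
    refine Tendsto.mul ?_ ?_
    · exact Stirling.tendsto_stirlingSeq_sqrt_pi.mul tendsto_const_nhds
    · exact (Real.continuous_exp.tendsto (-(1/2:ℝ))).comp (Filter.Tendsto.neg hseq_tendsto)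
  rw [hval] at h1
  refine h1.congr' ?_
  filter_upwards [eventually_ge_atTop 2] with d hd
  exact (rho_div_sqrt hd).symm

end Analysis

/-- For Latin hypercube samples `X^{(d)}` of `N = d` points in `[0,1)^d`,
`liminf_{d→∞} γ_{D^d_0}(X^{(d)}) / √d ≥ √(2π/e)`. -/
theorem stmt1 (Ω : ℕ → Type) (mΩ : ∀ d, MeasurableSpace (Ω d))
    (μ : ∀ d, Measure (Ω d)) (hprob : ∀ d, IsProbabilityMeasure (μ d))
    (X : ∀ d, Fin d → Ω d → Fin d → ℝ)
    (π : ∀ d, Fin d → Ω d → Equiv.Perm (Fin d))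
    (U : ∀ d, Fin d → Ω d → Fin d → ℝ)
    (h : ∀ d, 2 ≤ d → IsLHS (μ d) d d (X d) (π d) (U d)) :
    ENNReal.ofReal (Real.sqrt (2 * Real.pi / Real.exp 1)) ≤
      Filter.liminf
        (fun d : ℕ => corrNum (μ d) (boxDiffs d) (X d) / ENNReal.ofReal (Real.sqrt d))
        Filter.atTop := by
  have h1 : Filter.Tendsto (fun d : ℕ => ENNReal.ofReal (rhoLHS d / Real.sqrt d)) Filter.atTop
      (nhds (ENNReal.ofReal (Real.sqrt (2 * Real.pi / Real.exp 1)))) :=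
    ENNReal.tendsto_ofReal rho_tendsto
  rw [← h1.liminf_eq]
  refine Filter.liminf_le_liminf ?_
  filter_upwards [Filter.eventually_ge_atTop 2] with d hd
  have hc := corrNum_ge (μ := μ d) (h d hd) hd
  have hd0 : (0:ℝ) < d := by
    have : (2:ℝ) ≤ d := by exact_mod_cast hd
    linarith
  have hsq : (0:ℝ) < Real.sqrt d := Real.sqrt_pos.2 hd0
  rw [ENNReal.ofReal_div_of_pos hsq]
  exact ENNReal.div_le_div hc le_rfl

end LHSPaper
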